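/- Let ρ and σ be density matrices on a finite-dimensional complex Hilbert space. Then (1/2)·‖ρ − σ‖₁ ≤ √(1 − F(ρ, σ)), where F(ρ, σ) = (Tr√(√σ · ρ · √σ))² is the fidelity. -/

import Mathlib

open Matrix ComplexOrder Classical

/-- The square root of a positive semidefinite matrix, as `Matrix.PosSemidef.sqrt` was defined in
the older Mathlib (removed since). -/
noncomputable def Matrix.PosSemidef.sqrt {n : Type*} [Fintype n] [DecidableEq n]
    {A : Matrix n n ℂ} (hA : A.PosSemidef) : Matrix n n ℂ :=
  hA.1.eigenvectorUnitary.1 * diagonal ((↑) ∘ (√·) ∘ hA.1.eigenvalues) *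
    (star hA.1.eigenvectorUnitary : Matrix n n ℂ)

namespace FvdGaux
set_option linter.unusedSectionVars false
variable {n : Type*} [Fintype n] [DecidableEq n]


noncomputable def cg (U : Matrix.unitaryGroup n ℂ) (d : n → ℂ) : Matrix n n ℂ :=
  (U : Matrix n n ℂ) * diagonal d * star (U : Matrix n n ℂ)

lemma cg_mul (U : Matrix.unitaryGroup n ℂ) (d e : n → ℂ) :
    cg U d * cg U e = cg U (d * e) := by
  unfold cg
  calc (U : Matrix n n ℂ) * diagonal d * star (U : Matrix n n ℂ) *
        ((U : Matrix n n ℂ) * diagonal e * star (U : Matrix n n ℂ))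
      = (U : Matrix n n ℂ) * diagonal d *
          (star (U : Matrix n n ℂ) * (U : Matrix n n ℂ)) * diagonal e *
          star (U : Matrix n n ℂ) := by noncomm_ring
    _ = (U : Matrix n n ℂ) * diagonal (d * e) * star (U : Matrix n n ℂ) := by
        rw [mem_unitaryGroup_iff'.mp U.2, mul_one, mul_assoc ((U : Matrix n n ℂ)),
          diagonal_mul_diagonal]
        rfl

lemma cg_conjTranspose (U : Matrix.unitaryGroup n ℂ) (d : n → ℂ) :
    (cg U d)ᴴ = cg U (star d) := by
  unfold cg
  rw [conjTranspose_mul, conjTranspose_mul, diagonal_conjTranspose]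
  rw [show star (U : Matrix n n ℂ) = (U : Matrix n n ℂ)ᴴ from rfl]
  rw [conjTranspose_conjTranspose]
  noncomm_ring

lemma trace_cg (U : Matrix.unitaryGroup n ℂ) (d : n → ℂ) :
    (cg U d).trace = ∑ i, d i := by
  unfold cg
  rw [trace_mul_cycle, mem_unitaryGroup_iff'.mp U.2, one_mul, trace_diagonal]

lemma cg_one (U : Matrix.unitaryGroup n ℂ) : cg U (fun _ => 1) = 1 := by
  unfold cg
  rw [show (diagonal (fun _ => (1:ℂ)) : Matrix n n ℂ) = 1 from diagonal_one, mul_one,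
    mem_unitaryGroup_iff.mp U.2]

lemma cg_posSemidef (U : Matrix.unitaryGroup n ℂ) {d : n → ℂ} (hd : ∀ i, 0 ≤ d i) :
    (cg U d).PosSemidef := by
  have h : (diagonal d).PosSemidef := .diagonal hd
  exact h.mul_mul_conjTranspose_same (U : Matrix n n ℂ)

lemma cg_sub (U : Matrix.unitaryGroup n ℂ) (d e : n → ℂ) :
    cg U d - cg U e = cg U (d - e) := by
  unfold cg
  rw [show diagonal (d - e) = diagonal d - diagonal e from by
    ext i j; by_cases h : i = j <;> simp [diagonal, h]]
  noncomm_ring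

lemma one_sub_cg (U : Matrix.unitaryGroup n ℂ) (d : n → ℂ) :
    1 - cg U d = cg U (fun i => 1 - d i) := by
  rw [← cg_one U, cg_sub]; rfl

theorem _root_.Matrix.PosSemidef.posSemidef_sqrt {A : Matrix n n ℂ} (hA : A.PosSemidef) :
    hA.sqrt.PosSemidef := by
  have h : (diagonal ((↑) ∘ (√·) ∘ hA.1.eigenvalues : n → ℂ)).PosSemidef :=
    .diagonal fun _ => Complex.zero_le_real.mpr (Real.sqrt_nonneg _)
  unfold Matrix.PosSemidef.sqrt
  exact h.mul_mul_conjTranspose_same (hA.1.eigenvectorUnitary : Matrix n n ℂ)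

theorem _root_.Matrix.PosSemidef.sqrt_mul_self {A : Matrix n n ℂ} (hA : A.PosSemidef) :
    hA.sqrt * hA.sqrt = A := by
  have hspec : A = cg hA.1.eigenvectorUnitary (fun i => (hA.1.eigenvalues i : ℂ)) :=
    hA.1.spectral_theorem
  show cg hA.1.eigenvectorUnitary ((↑) ∘ (√·) ∘ hA.1.eigenvalues) *
    cg hA.1.eigenvectorUnitary ((↑) ∘ (√·) ∘ hA.1.eigenvalues) = A
  rw [cg_mul]
  conv_rhs => rw [hspec]
  congr 1
  funext i
  simp only [Pi.mul_apply, Function.comp_apply, ← Complex.ofReal_mul,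
    Real.mul_self_sqrt (hA.eigenvalues_nonneg i)]

theorem _root_.Matrix.PosSemidef.sq_sqrt {A : Matrix n n ℂ} (hA : A.PosSemidef) :
    hA.sqrt ^ 2 = A := by
  rw [sq]; exact hA.sqrt_mul_self

theorem _root_.Matrix.PosSemidef.eq_sqrt_of_sq_eq {A B : Matrix n n ℂ} (hB : B.PosSemidef)
    (hA : A.PosSemidef) (h : B ^ 2 = A) : B = hA.sqrt := by
  have h1 : hA.sqrt = cfc Real.sqrt A := by rw [hA.1.cfc_eq]; rfl
  have hsa : IsSelfAdjoint B := hB.1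
  rw [h1, ← h, ← cfc_comp_pow Real.sqrt 2 B (ha := hsa)]
  conv_lhs => rw [← cfc_id (R := ℝ) (a := B) hsa]
  apply cfc_congr
  intro x hx
  rw [hB.1.spectrum_real_eq_range_eigenvalues] at hx
  obtain ⟨i, rfl⟩ := hx
  simp [Real.sqrt_sq (hB.eigenvalues_nonneg i)]

attribute [irreducible] Matrix.PosSemidef.sqrt



lemma diag_nonneg {A : Matrix n n ℂ} (hA : A.PosSemidef) (i : n) : 0 ≤ A i i := by
  exact hA.diag_nonneg

lemma trace_re_nonneg {A : Matrix n n ℂ} (hA : A.PosSemidef) : 0 ≤ A.trace.re := by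
  rw [trace, Complex.re_sum]
  exact Finset.sum_nonneg fun i _ => (Complex.le_def.mp (diag_nonneg hA i)).1

lemma trace_mul_re_nonneg {A B : Matrix n n ℂ} (hA : A.PosSemidef) (hB : B.PosSemidef) :
    0 ≤ (A * B).trace.re := by
  have h1 : A * B = hA.sqrt * (hA.sqrt * B) := by
    rw [← mul_assoc, hA.sqrt_mul_self]
  rw [h1, trace_mul_comm]
  have h2 : hA.sqrt * B * hA.sqrt = hA.sqrt * B * hA.sqrtᴴ := by
    rw [hA.posSemidef_sqrt.1]
  have := hB.mul_mul_conjTranspose_same hA.sqrt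
  rw [← h2] at this
  rw [mul_assoc] at this ⊢
  exact trace_re_nonneg this

lemma trace_mul_le_trace {X Y : Matrix n n ℂ} (hX : X.PosSemidef) (hY : (1 - Y).PosSemidef) :
    (X * Y).trace.re ≤ X.trace.re := by
  have h := trace_mul_re_nonneg hX hY
  have heq : X * (1 - Y) = X - X * Y := by noncomm_ring
  rw [heq, trace_sub, Complex.sub_re] at h
  linarith

lemma posSemidef_one_sub_proj {Q : Matrix n n ℂ} (hQh : Qᴴ = Q) (hQi : Q * Q = Q) :
    (1 - Q).PosSemidef := by
  have h : (1 - Q)ᴴ * (1 - Q) = 1 - Q := by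
    rw [conjTranspose_sub, conjTranspose_one, hQh, sub_mul, one_mul, mul_sub, mul_one, hQi]
    abel
  rw [← h]
  exact posSemidef_conjTranspose_mul_self _

lemma trace_conjTranspose_mul_eq (X Y : Matrix n n ℂ) :
    (Xᴴ * Y).trace = ∑ p : n × n, (starRingEnd ℂ) (X p.1 p.2) * Y p.1 p.2 := by
  rw [trace, Fintype.sum_prod_type]
  simp only [diag, mul_apply, conjTranspose_apply]
  rw [Finset.sum_comm]
  rfl

lemma trace_conjTranspose_mul_self_re (X : Matrix n n ℂ) :
    (Xᴴ * X).trace.re = ∑ p : n × n, ‖X p.1 p.2‖ ^ 2 := by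
  rw [trace_conjTranspose_mul_eq, Complex.re_sum]
  congr 1; funext p
  rw [mul_comm, Complex.mul_conj, Complex.ofReal_re, Complex.normSq_eq_norm_sq]

lemma abs_trace_conjTranspose_mul_le (A B : Matrix n n ℂ) :
    ‖(Aᴴ * B).trace‖ ≤
      Real.sqrt ((Aᴴ * A).trace.re) * Real.sqrt ((Bᴴ * B).trace.re) := by
  rw [trace_conjTranspose_mul_eq, trace_conjTranspose_mul_self_re,
    trace_conjTranspose_mul_self_re]
  calc ‖∑ p : n × n, (starRingEnd ℂ) (A p.1 p.2) * B p.1 p.2‖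
      ≤ ∑ p : n × n, ‖(starRingEnd ℂ) (A p.1 p.2) * B p.1 p.2‖ := by
        exact norm_sum_le _ _
    _ = ∑ p : n × n, ‖A p.1 p.2‖ * ‖B p.1 p.2‖ := by
        congr 1; funext p; rw [norm_mul, Complex.norm_conj]
    _ ≤ _ := Real.sum_mul_le_sqrt_mul_sqrt _ _ _

lemma exists_contraction_polar_aux (M H : Matrix n n ℂ) (hHps : H.PosSemidef)
    (hHsq : H * H = Mᴴ * M) :
    ∃ C : Matrix n n ℂ, Cᴴ * M = H ∧ (1 - C * Cᴴ).PosSemidef := by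
  have hHherm : H.IsHermitian := hHps.1
  set V := hHherm.eigenvectorUnitary with hV
  set ev := hHherm.eigenvalues with hev
  have hevnn : ∀ i, 0 ≤ ev i := hHps.eigenvalues_nonneg
  have hspec : H = cg V (fun i => (ev i : ℂ)) := hHherm.spectral_theorem
  set g : n → ℂ := fun i => if ev i = 0 then 0 else ((ev i)⁻¹ : ℝ) with hg
  set ind : n → ℂ := fun i => if ev i = 0 then 0 else 1 with hind
  set Hp := cg V g with hHp
  set P := cg V ind with hPdef
  have hHpH : Hp * H = P := by
    rw [hspec, hHp, cg_mul, hPdef]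
    have hfun : (g * fun i => ((ev i : ℂ))) = ind := by
      funext i
      by_cases hi : ev i = 0
      · simp [hg, hind, hi]
      · simp only [hg, hind, Pi.mul_apply, if_neg hi, ← Complex.ofReal_mul,
          inv_mul_cancel₀ hi, Complex.ofReal_one]
    rw [hfun]
  have hPH : P * H = H := by
    rw [hspec, hPdef, cg_mul]
    have hfun : (ind * fun i => ((ev i : ℂ))) = fun i => ((ev i : ℂ)) := by
      funext i; by_cases hi : ev i = 0 <;> simp [hind, hi]
    rw [hfun]
  have hHpherm : Hpᴴ = Hp := by
    rw [hHp, cg_conjTranspose]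
    have hfun : star g = g := by
      funext i; by_cases hi : ev i = 0 <;> simp [hg, hi]
    rw [hfun]
  -- M * P = M
  have hPherm : (1 - P)ᴴ = 1 - P := by
    rw [one_sub_cg, cg_conjTranspose]
    have hfun : star (fun i => 1 - ind i) = fun i => 1 - ind i := by
      funext i; by_cases hi : ev i = 0 <;> simp [hind, hi]
    rw [hfun]
  have h1 : H * (1 - P) = 0 := by
    rw [one_sub_cg, hspec, cg_mul]
    have : (fun i => (ev i : ℂ)) * (fun i => 1 - ind i) = 0 := by
      funext i; by_cases hi : ev i = 0 <;> simp [hind, hi]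
    rw [this]
    show (V : Matrix n n ℂ) * diagonal (0 : n → ℂ) * star (V : Matrix n n ℂ) = 0
    rw [show (diagonal (0 : n → ℂ)) = 0 from diagonal_zero, mul_zero, zero_mul]
  have h2 : (1 - P) * H = 0 := by
    rw [one_sub_cg, hspec, cg_mul]
    have : (fun i => 1 - ind i) * (fun i => (ev i : ℂ)) = 0 := by
      funext i; by_cases hi : ev i = 0 <;> simp [hind, hi]
    rw [this]
    show (V : Matrix n n ℂ) * diagonal (0 : n → ℂ) * star (V : Matrix n n ℂ) = 0
    rw [show (diagonal (0 : n → ℂ)) = 0 from diagonal_zero, mul_zero, zero_mul]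
  have hMP : M * P = M := by
    have h3 : (M * (1 - P))ᴴ * (M * (1 - P)) = 0 := by
      rw [conjTranspose_mul, hPherm]
      calc (1-P) * Mᴴ * (M * (1-P)) = (1-P) * (Mᴴ * M) * (1-P) := by noncomm_ring
        _ = ((1-P) * H) * (H * (1-P)) := by rw [← hHsq]; noncomm_ring
        _ = 0 := by rw [h1, h2, zero_mul]
    have h4 : M * (1 - P) = 0 := conjTranspose_mul_self_eq_zero.mp h3
    have h5 : M * (1 - P) = M - M * P := by noncomm_ring
    rw [h5] at h4
    linear_combination (norm := noncomm_ring) -h4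
  refine ⟨M * Hp, ?_, ?_⟩
  · -- Cᴴ M = H
    have hC : (M * Hp)ᴴ = Hp * Mᴴ := by rw [conjTranspose_mul, hHpherm]
    calc (M * Hp)ᴴ * M = Hp * (Mᴴ * M) := by rw [hC]; noncomm_ring
      _ = Hp * H * H := by rw [← hHsq]; noncomm_ring
      _ = H := by rw [hHpH, hPH]
  · -- 1 - C Cᴴ PSD
    set K := cg V (g * g) with hKdef
    have hKHK : K * (H * H) * K = K := by
      rw [hspec, hKdef, cg_mul, cg_mul, cg_mul]
      have hfun : (g * g * ((fun i => ((ev i : ℂ))) * fun i => ((ev i : ℂ))) * (g * g)) = g * g := by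
        funext i
        by_cases hi : ev i = 0
        · simp [hg, hi]
        · have : ((ev i : ℂ)) ≠ 0 := by exact_mod_cast hi
          simp only [hg, Pi.mul_apply, if_neg hi, ← Complex.ofReal_inv]
          field_simp
          rw [← Complex.ofReal_pow, ← Complex.ofReal_pow, ← Complex.ofReal_mul, one_div, inv_pow,
            inv_mul_cancel₀ (pow_ne_zero 2 hi), Complex.ofReal_one]
      rw [hfun]
    have hQ : M * Hp * (M * Hp)ᴴ = M * K * Mᴴ := by
      rw [conjTranspose_mul, hHpherm, hKdef, ← cg_mul, ← hHp]
      noncomm_ring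
    rw [hQ]
    apply posSemidef_one_sub_proj
    · have hKherm : Kᴴ = K := by
        rw [hKdef, cg_conjTranspose]
        have hfun2 : star (g * g) = g * g := by
          funext i; by_cases hi : ev i = 0 <;> simp [hg, hi]
        rw [hfun2]
      rw [conjTranspose_mul, conjTranspose_mul, conjTranspose_conjTranspose, hKherm]
      noncomm_ring
    · calc M * K * Mᴴ * (M * K * Mᴴ) = M * (K * (Mᴴ * M) * K) * Mᴴ := by noncomm_ring
        _ = M * (K * (H * H) * K) * Mᴴ := by rw [← hHsq]
        _ = M * K * Mᴴ := by rw [hKHK]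

lemma exists_contraction_polar (M : Matrix n n ℂ) :
    ∃ C : Matrix n n ℂ, Cᴴ * M = (posSemidef_conjTranspose_mul_self M).sqrt ∧
      (1 - C * Cᴴ).PosSemidef :=
  exists_contraction_polar_aux M _ (posSemidef_conjTranspose_mul_self M).posSemidef_sqrt
    (by rw [← pow_two]; exact (posSemidef_conjTranspose_mul_self M).sq_sqrt)

end FvdGaux

/-- The trace norm `Tr √(AᴴA)` of a complex matrix. -/
noncomputable def traceNorm {n : Type*} [Fintype n] [DecidableEq n]
    (A : Matrix n n ℂ) : ℝ :=
  ((Matrix.posSemidef_conjTranspose_mul_self A).sqrt.trace).re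

/-- `Tr √A` for a positive semidefinite matrix (junk value `0` otherwise). -/
noncomputable def traceSqrt {n : Type*} [Fintype n] [DecidableEq n]
    (A : Matrix n n ℂ) : ℝ :=
  if h : A.PosSemidef then (h.sqrt.trace).re else 0

/-- The fidelity `F(ρ,σ) = (Tr √(√σ ρ √σ))²` (junk value if `σ` is not PSD). -/
noncomputable def fidelity {n : Type*} [Fintype n] [DecidableEq n]
    (ρ σ : Matrix n n ℂ) : ℝ :=
  if h : σ.PosSemidef then (traceSqrt (h.sqrt * ρ * h.sqrt)) ^ 2 else 0


lemma scalar_key {p1 q1 p2 q2 sF t : ℝ} (hp1 : 0 ≤ p1) (hq1 : 0 ≤ q1) (hp2 : 0 ≤ p2)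
    (hq2 : 0 ≤ q2) (hsump : p1 + p2 = 1) (hsumq : q1 + q2 = 1) (hpq : p1 - q1 = t)
    (hsF0 : 0 ≤ sF)
    (hle : sF ≤ Real.sqrt p1 * Real.sqrt q1 + Real.sqrt p2 * Real.sqrt q2) :
    t ^ 2 ≤ 1 - sF ^ 2 := by
  set a := Real.sqrt p1 with ha
  set b := Real.sqrt q1 with hb
  set c := Real.sqrt p2 with hc
  set d := Real.sqrt q2 with hd
  have ha2 : a ^ 2 = p1 := Real.sq_sqrt hp1
  have hb2 : b ^ 2 = q1 := Real.sq_sqrt hq1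
  have hc2 : c ^ 2 = p2 := Real.sq_sqrt hp2
  have hd2 : d ^ 2 = q2 := Real.sq_sqrt hq2
  have h1 : sF ^ 2 ≤ (a * b + c * d) ^ 2 := pow_le_pow_left₀ hsF0 hle 2
  have h2 : (a * b + c * d) ^ 2 ≤ (b ^ 2 + c ^ 2) * (a ^ 2 + d ^ 2) := by
    nlinarith [sq_nonneg (b * d - a * c)]
  have hp2' : p2 = 1 - p1 := by linarith
  have hq2' : q2 = 1 - q1 := by linarith
  have ht' : t = p1 - q1 := hpq.symm
  have h3 : (b ^ 2 + c ^ 2) * (a ^ 2 + d ^ 2) = 1 - t ^ 2 := by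
    rw [ha2, hb2, hc2, hd2, hp2', hq2', ht']
    ring
  linarith

set_option maxHeartbeats 1000000 in
open FvdGaux in
theorem stmt_8 {n : Type*} [Fintype n] [DecidableEq n]
    (ρ σ : Matrix n n ℂ)
    (hρ : ρ.PosSemidef) (hρ1 : ρ.trace = 1)
    (hσ : σ.PosSemidef) (hσ1 : σ.trace = 1) :
    (1 / 2) * traceNorm (ρ - σ) ≤ Real.sqrt (1 - fidelity ρ σ) := by
  classical
  have hΔ : (ρ - σ).IsHermitian := hρ.1.sub hσ.1
  set W := hΔ.eigenvectorUnitary with hW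
  set e := hΔ.eigenvalues with he
  have hspecΔ : ρ - σ = cg W (fun i => ((e i : ℂ))) := hΔ.spectral_theorem
  set indp : n → ℂ := fun i => if 0 ≤ e i then 1 else 0 with hindp
  set Ep := cg W indp with hEp
  set Em := 1 - Ep with hEm
  have hEpherm : Epᴴ = Ep := by
    rw [hEp, cg_conjTranspose]
    have h : star indp = indp := by
      funext i; by_cases hi : 0 ≤ e i <;> simp [hindp, hi]
    rw [h]
  have hEpidem : Ep * Ep = Ep := by
    rw [hEp, cg_mul]
    have h : indp * indp = indp := by
      funext i; by_cases hi : 0 ≤ e i <;> simp [hindp, hi]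
    rw [h]
  have hEmherm : Emᴴ = Em := by
    rw [hEm, conjTranspose_sub, conjTranspose_one, hEpherm]
  have hEmidem : Em * Em = Em := by
    rw [hEm, sub_mul, one_mul, mul_sub, mul_one, hEpidem]; abel
  set t : ℝ := ∑ i, (if 0 ≤ e i then e i else 0) with ht
  -- trace norm equals sum of |eigenvalues|
  have htraceNorm : traceNorm (ρ - σ) = ∑ i, |e i| := by
    have hAbsps : (cg W (fun i => ((|e i| : ℝ) : ℂ))).PosSemidef := by
      refine cg_posSemidef W fun i => ?_
      rw [Complex.zero_le_real]
      exact abs_nonneg _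
    have hsq : (cg W (fun i => ((|e i| : ℝ) : ℂ))) ^ 2 = (ρ - σ)ᴴ * (ρ - σ) := by
      rw [pow_two, cg_mul, hΔ.eq]
      conv_rhs => rw [hspecΔ]
      rw [cg_mul]
      have h : ((fun i => ((|e i| : ℝ) : ℂ)) * fun i => ((|e i| : ℝ) : ℂ))
          = ((fun i => ((e i : ℂ))) * fun i => ((e i : ℂ))) := by
        funext i
        simp only [Pi.mul_apply, ← Complex.ofReal_mul, abs_mul_abs_self]
      rw [h]
    have heq := hAbsps.eq_sqrt_of_sq_eq (posSemidef_conjTranspose_mul_self (ρ - σ)) hsq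
    rw [traceNorm, ← heq, trace_cg, Complex.re_sum]
    simp
  have hsum0 : ∑ i, e i = 0 := by
    have h0 : (∑ i, ((e i : ℂ))) = 0 := by
      rw [← trace_cg W, ← hspecΔ, trace_sub, hρ1, hσ1, sub_self]
    have h1 := congrArg Complex.re h0
    rw [Complex.re_sum] at h1
    simpa using h1
  have htN2 : traceNorm (ρ - σ) = 2 * t := by
    rw [htraceNorm, ht]
    have h : ∀ i, |e i| = 2 * (if 0 ≤ e i then e i else 0) - e i := by
      intro i; by_cases hi : 0 ≤ e i
      · rw [if_pos hi, abs_of_nonneg hi]; ring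
      · rw [if_neg hi, abs_of_neg (lt_of_not_ge hi)]; ring
    simp_rw [h]
    rw [Finset.sum_sub_distrib, hsum0, ← Finset.mul_sum]
    ring
  have ht0 : 0 ≤ t := by
    refine Finset.sum_nonneg fun i _ => ?_
    by_cases hi : 0 ≤ e i <;> simp [hi]
  -- measurement probabilities
  set p1 := ((Ep * ρ).trace).re with hp1
  set q1 := ((Ep * σ).trace).re with hq1
  set p2 := ((Em * ρ).trace).re with hp2
  set q2 := ((Em * σ).trace).re with hq2
  have tr_nonneg : ∀ (E : Matrix n n ℂ), Eᴴ = E → E * E = E →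
      ∀ (X : Matrix n n ℂ), X.PosSemidef → 0 ≤ ((E * X).trace).re := by
    intro E hE hEE X hX
    have h1 : (E * X * Eᴴ).trace = (E * X).trace := by
      rw [hE, trace_mul_cycle, hEE]
    rw [← h1]
    exact trace_re_nonneg (hX.mul_mul_conjTranspose_same E)
  have hp1n : 0 ≤ p1 := tr_nonneg Ep hEpherm hEpidem ρ hρ
  have hq1n : 0 ≤ q1 := tr_nonneg Ep hEpherm hEpidem σ hσ
  have hp2n : 0 ≤ p2 := tr_nonneg Em hEmherm hEmidem ρ hρ
  have hq2n : 0 ≤ q2 := tr_nonneg Em hEmherm hEmidem σ hσ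
  have hsump : p1 + p2 = 1 := by
    have hadd : Ep * ρ + Em * ρ = ρ := by rw [hEm]; noncomm_ring
    have h1 : (Ep * ρ).trace + (Em * ρ).trace = ρ.trace := by rw [← trace_add, hadd]
    have h2 := congrArg Complex.re h1
    rw [Complex.add_re, hρ1] at h2
    simpa using h2
  have hsumq : q1 + q2 = 1 := by
    have hadd : Ep * σ + Em * σ = σ := by rw [hEm]; noncomm_ring
    have h1 : (Ep * σ).trace + (Em * σ).trace = σ.trace := by rw [← trace_add, hadd]
    have h2 := congrArg Complex.re h1
    rw [Complex.add_re, hσ1] at h2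
    simpa using h2
  have hpq : p1 - q1 = t := by
    have h1 : Ep * (ρ - σ) = cg W (indp * fun i => ((e i : ℂ))) := by
      rw [hspecΔ, hEp, cg_mul]
    have h2 : ((Ep * (ρ - σ)).trace).re = t := by
      rw [h1, trace_cg, Complex.re_sum, ht]
      congr 1; funext i
      by_cases hi : 0 ≤ e i <;> simp [hindp, hi]
    rw [mul_sub, trace_sub, Complex.sub_re] at h2
    exact h2
  -- fidelity
  have hB : (hσ.sqrt * ρ * hσ.sqrt).PosSemidef := by
    have h := hρ.conjTranspose_mul_mul_same hσ.sqrt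
    rwa [hσ.posSemidef_sqrt.1] at h
  set sF := ((hB.sqrt).trace).re with hsF
  have hfid : fidelity ρ σ = sF ^ 2 := by
    rw [fidelity, dif_pos hσ, traceSqrt, dif_pos hB]
  set M := hρ.sqrt * hσ.sqrt with hM
  have hMM : Mᴴ * M = hσ.sqrt * ρ * hσ.sqrt := by
    rw [hM, conjTranspose_mul, hσ.posSemidef_sqrt.1, hρ.posSemidef_sqrt.1]
    calc hσ.sqrt * hρ.sqrt * (hρ.sqrt * hσ.sqrt)
        = hσ.sqrt * (hρ.sqrt * hρ.sqrt) * hσ.sqrt := by noncomm_ring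
      _ = hσ.sqrt * ρ * hσ.sqrt := by rw [hρ.sqrt_mul_self]
  have hsqrt_eq : hB.sqrt = (posSemidef_conjTranspose_mul_self M).sqrt := by
    apply hB.posSemidef_sqrt.eq_sqrt_of_sq_eq
    rw [hB.sq_sqrt, ← hMM]
  obtain ⟨C, hC1, hC2⟩ := exists_contraction_polar M
  have hsFeq : sF = ((Cᴴ * M).trace).re := by
    rw [hC1, ← hsqrt_eq]
  have hsplit : Cᴴ * M = Cᴴ * hρ.sqrt * Ep * hσ.sqrt + Cᴴ * hρ.sqrt * Em * hσ.sqrt := by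
    rw [hM, hEm]; noncomm_ring
  have key : ∀ (E : Matrix n n ℂ), Eᴴ = E → E * E = E →
      ‖(Cᴴ * hρ.sqrt * E * hσ.sqrt).trace‖ ≤
        Real.sqrt (((E * ρ).trace).re) * Real.sqrt (((E * σ).trace).re) := by
    intro E hE hEE
    have hA : (E * (hρ.sqrt * C))ᴴ * (E * hσ.sqrt) = Cᴴ * hρ.sqrt * E * hσ.sqrt := by
      rw [conjTranspose_mul, conjTranspose_mul, hρ.posSemidef_sqrt.1, hE]
      calc Cᴴ * hρ.sqrt * E * (E * hσ.sqrt)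
          = Cᴴ * hρ.sqrt * (E * E) * hσ.sqrt := by noncomm_ring
        _ = Cᴴ * hρ.sqrt * E * hσ.sqrt := by rw [hEE]
    have hcs := abs_trace_conjTranspose_mul_le (E * (hρ.sqrt * C)) (E * hσ.sqrt)
    rw [hA] at hcs
    refine hcs.trans ?_
    have hBB : ((E * hσ.sqrt)ᴴ * (E * hσ.sqrt)).trace = (E * σ).trace := by
      rw [conjTranspose_mul, hσ.posSemidef_sqrt.1]
      calc (hσ.sqrt * Eᴴ * (E * hσ.sqrt)).trace
          = (hσ.sqrt * E * hσ.sqrt).trace := by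
            rw [hE]
            congr 1
            calc hσ.sqrt * E * (E * hσ.sqrt) = hσ.sqrt * (E * E) * hσ.sqrt := by noncomm_ring
              _ = hσ.sqrt * E * hσ.sqrt := by rw [hEE]
        _ = (E * σ).trace := by
            rw [trace_mul_cycle, hσ.sqrt_mul_self, trace_mul_comm]
    have hAA : (((E * (hρ.sqrt * C))ᴴ * (E * (hρ.sqrt * C))).trace).re ≤ ((E * ρ).trace).re := by
      have h1 : (E * (hρ.sqrt * C))ᴴ * (E * (hρ.sqrt * C))
          = Cᴴ * ((hρ.sqrt * E * hρ.sqrt) * C) := by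
        rw [conjTranspose_mul, conjTranspose_mul, hρ.posSemidef_sqrt.1, hE]
        calc Cᴴ * hρ.sqrt * E * (E * (hρ.sqrt * C))
            = Cᴴ * ((hρ.sqrt * (E * E) * hρ.sqrt) * C) := by noncomm_ring
          _ = Cᴴ * ((hρ.sqrt * E * hρ.sqrt) * C) := by rw [hEE]
      have hX : (hρ.sqrt * E * hρ.sqrt).PosSemidef := by
        have h2 : (E * hρ.sqrt)ᴴ * (E * hρ.sqrt) = hρ.sqrt * E * hρ.sqrt := by
          rw [conjTranspose_mul, hρ.posSemidef_sqrt.1, hE]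
          calc hρ.sqrt * E * (E * hρ.sqrt) = hρ.sqrt * (E * E) * hρ.sqrt := by noncomm_ring
            _ = hρ.sqrt * E * hρ.sqrt := by rw [hEE]
        rw [← h2]; exact posSemidef_conjTranspose_mul_self _
      have h3 : (Cᴴ * ((hρ.sqrt * E * hρ.sqrt) * C)).trace
          = ((hρ.sqrt * E * hρ.sqrt) * (C * Cᴴ)).trace := by
        rw [trace_mul_comm, ← mul_assoc, mul_assoc]
      have h4 := trace_mul_le_trace hX hC2
      have h5 : (hρ.sqrt * E * hρ.sqrt).trace = (E * ρ).trace := by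
        rw [trace_mul_cycle, hρ.sqrt_mul_self, trace_mul_comm]
      rw [h1, h3]
      rw [← h5]
      exact h4
    rw [hBB]
    exact mul_le_mul_of_nonneg_right (Real.sqrt_le_sqrt hAA) (Real.sqrt_nonneg _)
  have hsF_le : sF ≤ Real.sqrt p1 * Real.sqrt q1 + Real.sqrt p2 * Real.sqrt q2 := by
    rw [hsFeq, hsplit, trace_add, Complex.add_re]
    have h1 := key Ep hEpherm hEpidem
    have h2 := key Em hEmherm hEmidem
    calc ((Cᴴ * hρ.sqrt * Ep * hσ.sqrt).trace).re + ((Cᴴ * hρ.sqrt * Em * hσ.sqrt).trace).re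
        ≤ ‖(Cᴴ * hρ.sqrt * Ep * hσ.sqrt).trace‖
          + ‖(Cᴴ * hρ.sqrt * Em * hσ.sqrt).trace‖ :=
          add_le_add (Complex.re_le_norm _) (Complex.re_le_norm _)
      _ ≤ _ := add_le_add h1 h2
  have hsF0 : 0 ≤ sF := trace_re_nonneg hB.posSemidef_sqrt
  -- final scalar argument
  rw [htN2, hfid]
  have hgoal : (1 : ℝ) / 2 * (2 * t) = t := by ring
  rw [hgoal]
  have hkey : t ^ 2 ≤ 1 - sF ^ 2 :=
    scalar_key hp1n hq1n hp2n hq2n hsump hsumq hpq hsF0 hsF_le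
  calc t = Real.sqrt (t ^ 2) := (Real.sqrt_sq ht0).symm
    _ ≤ Real.sqrt (1 - sF ^ 2) := Real.sqrt_le_sqrt hkey
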